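/- Let G = (V,E) be a finite undirected multigraph and A, B ⊆ V². If two fourientations φ and φ' of G are cycle-cocycle equivalent, then φ is (A,B)-valid if and only if φ' is (A,B)-valid. -/

import Mathlib

namespace SubgraphsVsOrientations

/-- The four possible configurations of an edge in a fourientation:
`zero` = 0-way, `forward`/`backward` = the two 1-way configurations (relative to
a reference direction of the edge), `two` = 2-way. -/
inductive Four : Type
  | zero | forward | backward | two
deriving DecidableEq

instance : Fintype Four :=
  ⟨{Four.zero, Four.forward, Four.backward, Four.two}, fun x => by cases x <;> simp⟩

variable {V E : Type*}

/-- Whether configuration `c` allows traversal of the edge in direction `b`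
(`b = true` means from `src` to `tgt`). -/
def allows : Four → Bool → Prop
  | Four.zero, _ => False
  | Four.forward, b => b = true
  | Four.backward, b => b = false
  | Four.two, _ => True

/-- An edge configuration is solid if it is 0-way or 2-way. -/
def IsSolid (c : Four) : Prop := c = Four.zero ∨ c = Four.two

/-- A configuration is 1-way if it is `forward` or `backward`. -/
def IsOneWay (c : Four) : Prop := c = Four.forward ∨ c = Four.backward

/-- Reversing a configuration: swaps the two 1-way configurations,
fixes 0-way and 2-way. -/
def flipFour : Four → Four
  | Four.forward => Four.backward
  | Four.backward => Four.forward
  | c => c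

/-- The 1-way configuration corresponding to direction `b`. -/
def oneWayFour (b : Bool) : Four := if b then Four.forward else Four.backward

/-- Tail of the arc `(e, b)` (the edge `e` traversed in direction `b`). -/
def arcTail (src tgt : E → V) (a : E × Bool) : V := if a.2 then src a.1 else tgt a.1

/-- Head of the arc `(e, b)`. -/
def arcHead (src tgt : E → V) (a : E × Bool) : V := if a.2 then tgt a.1 else src a.1

/-- One-step relation of the digraph `G⃗(A,B;φ)`: there is an arc from `x` to `y`, either
a traversable directed edge of the fourientation `φ`, or an extra arc from `A ∪ B`. -/
def arcStep (src tgt : E → V) (A B : Set (V × V)) (φ : E → Four) (x y : V) : Prop :=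
  (∃ a : E × Bool, allows (φ a.1) a.2 ∧ arcTail src tgt a = x ∧ arcHead src tgt a = y)
    ∨ (x, y) ∈ A ∪ B

/-- Reachability by a directed path in the digraph `G⃗(A,B;φ)`. -/
def reach (src tgt : E → V) (A B : Set (V × V)) (φ : E → Four) : V → V → Prop :=
  Relation.ReflTransGen (arcStep src tgt A B φ)

/-- A fourientation `φ` is `(A,B)`-valid: in `G⃗(A,B;φ)`, for every `(u,v) ∈ A` the vertex `v`
cannot reach `u`, and for every `(u,v) ∈ B` the vertex `v` can reach `u`. -/
def IsValid (src tgt : E → V) (A B : Set (V × V)) (φ : E → Four) : Prop :=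
  (∀ p ∈ A, ¬ reach src tgt A B φ p.2 p.1) ∧ (∀ p ∈ B, reach src tgt A B φ p.2 p.1)

/-- The set of solid edges of a fourientation. -/
def solidSet (φ : E → Four) : Set E := {e | IsSolid (φ e)}

/-- The fourientation associated to an orientation `σ : E → Bool` (every edge 1-way). -/
def toFour (σ : E → Bool) : E → Four := fun e => oneWayFour (σ e)

open Classical in
/-- The fourientation associated to a (spanning) subgraph `F ⊆ E`: edges of `F` are 2-way,
the other edges are 0-way. -/
noncomputable def toFourSub (F : Set E) : E → Four :=
  fun e => if e ∈ F then Four.two else Four.zero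

/-- The arc `(e,b)` is the arc of a 1-way edge of `φ`. -/
def oneWayArc (φ : E → Four) (a : E × Bool) : Prop := φ a.1 = oneWayFour a.2

/-- `Cyc(φ)`: the set of cyclic 1-way edges (arcs) of the fourientation `φ`, in the digraph
`G⃗(A,B;φ)`: the head of the arc can reach its tail. -/
def CycSet (src tgt : E → V) (A B : Set (V × V)) (φ : E → Four) : Set (E × Bool) :=
  {a | oneWayArc φ a ∧ reach src tgt A B φ (arcHead src tgt a) (arcTail src tgt a)}

/-- `Acy(φ)`: the set of acyclic 1-way edges (arcs) of the fourientation `φ`. -/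
def AcySet (src tgt : E → V) (A B : Set (V × V)) (φ : E → Four) : Set (E × Bool) :=
  {a | oneWayArc φ a ∧ ¬ reach src tgt A B φ (arcHead src tgt a) (arcTail src tgt a)}

/-- `l` is (the arc sequence of) a directed cycle: a nonempty closed chain of arcs
visiting no vertex twice. -/
def IsDirCycle (src tgt : E → V) (l : List (E × Bool)) : Prop :=
  ∃ h : l ≠ [],
    l.Chain' (fun a b => arcHead src tgt a = arcTail src tgt b) ∧
    arcHead src tgt (l.getLast h) = arcTail src tgt (l.head h) ∧
    (l.map (arcTail src tgt)).Nodup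

/-- Reversing the directed cycle `l` in the fourientation `φ`: all 1-way edges on the cycle are
reversed, other edges (in particular 2-way edges of the cycle) are unchanged. -/
def revCyc [DecidableEq E] (φ : E → Four) (l : List (E × Bool)) : E → Four :=
  fun e => if (e, true) ∈ l ∨ (e, false) ∈ l then flipFour (φ e) else φ e

/-- One cycle-reversal move: `ψ` is obtained from `φ` by reversing a directed cycle of `φ`. -/
def CycleStep (src tgt : E → V) [DecidableEq E] (φ ψ : E → Four) : Prop :=
  ∃ l, IsDirCycle src tgt l ∧ (∀ a ∈ l, allows (φ a.1) a.2) ∧ ψ = revCyc φ l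

/-- The edge `e` crosses the cut given by `V1` (in either direction). -/
def edgeCrosses (src tgt : E → V) (V1 : Set V) (e : E) : Prop :=
  (src e ∈ V1 ∧ tgt e ∉ V1) ∨ (tgt e ∈ V1 ∧ src e ∉ V1)

/-- The cut `V1 / V1ᶜ` defines a directed `(A,B)`-cocycle of `G⃗(A,B;φ)`: the set of arcs from
`V1` to `V1ᶜ` is nonempty, no arc of the digraph goes from `V1ᶜ` to `V1`, and no arc of
`A ∪ B` crosses the cut (in either direction). -/
def IsABCocycleCut (src tgt : E → V) (A B : Set (V × V)) (φ : E → Four) (V1 : Set V) : Prop :=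
  (∃ a : E × Bool, allows (φ a.1) a.2 ∧ arcTail src tgt a ∈ V1 ∧ arcHead src tgt a ∉ V1) ∧
  (∀ a : E × Bool, allows (φ a.1) a.2 → ¬ (arcTail src tgt a ∉ V1 ∧ arcHead src tgt a ∈ V1)) ∧
  (∀ p ∈ A ∪ B, ((p : V × V).1 ∈ V1 ↔ p.2 ∈ V1))

open Classical in
/-- Reversing the directed cocycle given by the cut `V1`: all 1-way edges crossing the cut are
reversed, other edges (in particular 0-way edges crossing the cut) are unchanged. -/
noncomputable def revCut (src tgt : E → V) (φ : E → Four) (V1 : Set V) : E → Four :=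
  fun e => if edgeCrosses src tgt V1 e then flipFour (φ e) else φ e

/-- One cocycle-reversal move: `ψ` is obtained from `φ` by reversing a directed
`(A,B)`-cocycle of `φ`. -/
def CocycleStep (src tgt : E → V) (A B : Set (V × V)) (φ ψ : E → Four) : Prop :=
  ∃ V1 : Set V, IsABCocycleCut src tgt A B φ V1 ∧ ψ = revCut src tgt φ V1

/-- One cycle- or cocycle-reversal move. -/
def CCStep (src tgt : E → V) (A B : Set (V × V)) [DecidableEq E] (φ ψ : E → Four) : Prop :=
  CycleStep src tgt φ ψ ∨ CocycleStep src tgt A B φ ψ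

/-- `φ` contains no cycle (of the graph `G`) made entirely of 2-way edges. -/
def NoTwoWayCycle (src tgt : E → V) (φ : E → Four) : Prop :=
  ¬ ∃ l : List (E × Bool), IsDirCycle src tgt l ∧ (l.map Prod.fst).Nodup ∧
      ∀ a ∈ l, φ a.1 = Four.two

/-- `φ` contains no `(A,B)`-cocycle (of the graph `G`) made entirely of 0-way edges:
there is no cut, not crossed by any arc of `A ∪ B`, crossed by at least one edge of `G`,
all of whose crossing edges are 0-way. -/
def NoZeroWayCocycle (src tgt : E → V) (A B : Set (V × V)) (φ : E → Four) : Prop :=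
  ¬ ∃ V1 : Set V, (∃ e, edgeCrosses src tgt V1 e) ∧
      (∀ e, edgeCrosses src tgt V1 e → φ e = Four.zero) ∧
      (∀ p ∈ A ∪ B, ((p : V × V).1 ∈ V1 ↔ p.2 ∈ V1))

/-- The subgraph `F` contains no cycle (it is a forest). -/
def NoCycleIn (src tgt : E → V) (F : Set E) : Prop :=
  ¬ ∃ l : List (E × Bool), IsDirCycle src tgt l ∧ (l.map Prod.fst).Nodup ∧ ∀ a ∈ l, a.1 ∈ F

/-- One undirected adjacency step in the graph `F ∪ A̲ ∪ B̲`. -/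
def usym (src tgt : E → V) (A B : Set (V × V)) (F : Set E) (x y : V) : Prop :=
  (∃ e ∈ F, (src e = x ∧ tgt e = y) ∨ (src e = y ∧ tgt e = x)) ∨
  (∃ p ∈ A ∪ B, ((p : V × V) = (x, y) ∨ p = (y, x)))

/-- Connectivity (by undirected paths) in the graph `F ∪ A̲ ∪ B̲`. -/
def ureach (src tgt : E → V) (A B : Set (V × V)) (F : Set E) : V → V → Prop :=
  Relation.ReflTransGen (usym src tgt A B F)

/-- The subgraph `F` is `(A,B)`-connected: the connected components of `F ∪ A̲ ∪ B̲`
coincide with those of `G ∪ A̲ ∪ B̲`. -/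
def ABConnected (src tgt : E → V) (A B : Set (V × V)) (F : Set E) : Prop :=
  ∀ x y, ureach src tgt A B F x y ↔ ureach src tgt A B Set.univ x y



-- ======================= auxiliary lemmas =======================

section AuxLists
variable {α W : Type*} (T H : α → W) (R : W → W → Prop)

lemma pathReach' : ∀ (a : α) (t : List α),
    (a :: t).Chain' (fun x y => H x = T y) →
    (∀ x ∈ a :: t, R (T x) (H x)) →
    Relation.ReflTransGen R (T a) (H ((a :: t).getLast (by simp)))
  | a, [], _, hR => by
      simpa using Relation.ReflTransGen.single (hR a (by simp))
  | a, b :: t, hc, hR => by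
      have hc' := List.isChain_cons_cons.mp hc
      have ih := pathReach' b t hc'.2 (fun x hx => hR x (List.mem_cons_of_mem _ hx))
      have hlast : ((a :: b :: t).getLast (by simp)) = ((b :: t).getLast (by simp)) :=
        List.getLast_cons (by simp)
      rw [hlast]
      exact Relation.ReflTransGen.head (hR a (by simp)) (hc'.1 ▸ ih)

lemma reachToTail' : ∀ (a : α) (t : List α),
    (a :: t).Chain' (fun x y => H x = T y) →
    (∀ x ∈ a :: t, R (T x) (H x)) →
    ∀ x ∈ a :: t, Relation.ReflTransGen R (T a) (T x)
  | a, [], _, _, x, hx => by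
      simp at hx; subst hx; exact Relation.ReflTransGen.refl
  | a, b :: t, hc, hR, x, hx => by
      have hc' := List.isChain_cons_cons.mp hc
      rcases List.mem_cons.mp hx with rfl | hx'
      · exact Relation.ReflTransGen.refl
      · have ih := reachToTail' b t hc'.2 (fun y hy => hR y (List.mem_cons_of_mem _ hy)) x hx'
        exact Relation.ReflTransGen.head (hR a (by simp)) (hc'.1 ▸ ih)

lemma reachFromHead' : ∀ (a : α) (t : List α),
    (a :: t).Chain' (fun x y => H x = T y) →
    (∀ x ∈ a :: t, R (T x) (H x)) →
    ∀ x ∈ a :: t, Relation.ReflTransGen R (H x) (H ((a :: t).getLast (by simp)))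
  | a, [], _, _, x, hx => by
      simp at hx; subst hx; simp; exact Relation.ReflTransGen.refl
  | a, b :: t, hc, hR, x, hx => by
      have hc' := List.isChain_cons_cons.mp hc
      have hlast : ((a :: b :: t).getLast (by simp)) = ((b :: t).getLast (by simp)) :=
        List.getLast_cons (by simp)
      rw [hlast]
      rcases List.mem_cons.mp hx with rfl | hx'
      · have := pathReach' T H R b t hc'.2 (fun y hy => hR y (List.mem_cons_of_mem _ hy))
        exact hc'.1 ▸ this
      · exact reachFromHead' b t hc'.2 (fun y hy => hR y (List.mem_cons_of_mem _ hy)) x hx'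

lemma cycLemma (l : List α) (hl : l ≠ [])
    (hc : l.Chain' (fun x y => H x = T y))
    (hcl : H (l.getLast hl) = T (l.head hl))
    (hR : ∀ x ∈ l, R (T x) (H x)) :
    ∀ x ∈ l, Relation.ReflTransGen R (H x) (T x) := by
  obtain ⟨a, t, rfl⟩ := List.exists_cons_of_ne_nil hl
  intro x hx
  have h1 := reachFromHead' T H R a t hc hR x hx
  have h2 := reachToTail' T H R a t hc hR x hx
  simp only [List.head_cons] at hcl
  exact (h1.trans (by rw [hcl]; exact h2))

end AuxLists

section AuxMain
variable (src tgt : E → V) (A B : Set (V × V))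

lemma allows_flip (c : Four) (b : Bool) : allows (flipFour c) b ↔ allows c (!b) := by
  cases c <;> cases b <;> simp [flipFour, allows]

lemma tail_flip (a : E × Bool) : arcTail src tgt (a.1, !a.2) = arcHead src tgt a := by
  obtain ⟨e, b⟩ := a; cases b <;> simp [arcTail, arcHead]

lemma head_flip (a : E × Bool) : arcHead src tgt (a.1, !a.2) = arcTail src tgt a := by
  obtain ⟨e, b⟩ := a; cases b <;> simp [arcTail, arcHead]

lemma reachMono {θ θ' : E → Four}
    (h : ∀ x y, arcStep src tgt A B θ x y → reach src tgt A B θ' x y) :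
    ∀ x y, reach src tgt A B θ x y → reach src tgt A B θ' x y := by
  intro x y hr
  induction hr with
  | refl => exact Relation.ReflTransGen.refl
  | tail _ h2 ih => exact ih.trans (h _ _ h2)

lemma cycleStep_reach [DecidableEq E] (φ : E → Four) (l : List (E × Bool))
    (hcyc : IsDirCycle src tgt l) (hall : ∀ a ∈ l, allows (φ a.1) a.2) :
    ∀ x y, reach src tgt A B φ x y ↔ reach src tgt A B (revCyc φ l) x y := by
  set ψ := revCyc φ l with hψ
  obtain ⟨hl, hc, hcl, -⟩ := hcyc
  have hmemcond : ∀ a ∈ l, ((a.1, true) ∈ l ∨ (a.1, false) ∈ l) := by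
    intro a ha; obtain ⟨e, b⟩ := a; cases b
    · exact Or.inr ha
    · exact Or.inl ha
  have hψmem : ∀ a ∈ l, ψ a.1 = flipFour (φ a.1) := by
    intro a ha; simp only [hψ, revCyc, if_pos (hmemcond a ha)]
  have hψallows : ∀ a ∈ l, allows (ψ a.1) (!a.2) := by
    intro a ha
    rw [hψmem a ha, allows_flip, Bool.not_not]
    exact hall a ha
  have huniq : ∀ a ∈ l, ∀ b : Bool, φ a.1 = oneWayFour b → a.2 = b := by
    intro a ha b hb
    have := hall a ha
    rw [hb] at this
    cases b <;> simpa [oneWayFour, allows] using this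
  have cycφ : ∀ a ∈ l, reach src tgt A B φ (arcHead src tgt a) (arcTail src tgt a) := by
    refine cycLemma (arcTail src tgt) (arcHead src tgt) _ l hl hc hcl ?_
    intro a ha
    exact Or.inl ⟨a, hall a ha, rfl, rfl⟩
  have cycψ : ∀ a ∈ l, reach src tgt A B ψ (arcTail src tgt a) (arcHead src tgt a) := by
    have := cycLemma (α := E × Bool) (arcHead src tgt) (arcTail src tgt)
      (arcStep src tgt A B ψ) l.reverse (by simpa using hl) ?_ ?_ ?_
    · intro a ha
      exact this a (by simpa using ha)
    · unfold List.Chain' at hc ⊢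
      rw [List.isChain_reverse]
      exact hc.imp (fun a b h => h.symm)
    · rw [List.getLast_reverse, List.head_reverse]
      exact hcl.symm
    · intro a ha
      refine Or.inl ⟨(a.1, !a.2), hψallows a (by simpa using ha), ?_, ?_⟩
      · exact tail_flip src tgt a
      · exact head_flip src tgt a
  have stepφψ : ∀ x y, arcStep src tgt A B φ x y → reach src tgt A B ψ x y := by
    rintro x y (⟨⟨e, b⟩, hab, rfl, rfl⟩ | hmem)
    · by_cases hm : (e, true) ∈ l ∨ (e, false) ∈ l
      · cases hφe : φ e with
        | zero => rw [hφe] at hab; exact absurd hab (by simp [allows])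
        | two =>
            refine Relation.ReflTransGen.single (Or.inl ⟨(e, b), ?_, rfl, rfl⟩)
            rw [show ψ e = flipFour (φ e) by simp only [hψ, revCyc, if_pos hm], hφe]; trivial
        | forward =>
            have hb : b = true := by rw [hφe] at hab; exact hab
            subst hb
            have hel : (e, true) ∈ l := by
              rcases hm with h | h
              · exact h
              · exact absurd (huniq _ h true (by simp [hφe, oneWayFour])) (by simp)
            exact cycψ (e, true) hel
        | backward =>
            have hb : b = false := by rw [hφe] at hab; exact hab
            subst hb
            have hel : (e, false) ∈ l := by
              rcases hm with h | h
              · exact absurd (huniq _ h false (by simp [hφe, oneWayFour])) (by simp)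
              · exact h
            exact cycψ (e, false) hel
      · refine Relation.ReflTransGen.single (Or.inl ⟨(e, b), ?_, rfl, rfl⟩)
        simpa only [hψ, revCyc, if_neg hm] using hab
    · exact Relation.ReflTransGen.single (Or.inr hmem)
  have stepψφ : ∀ x y, arcStep src tgt A B ψ x y → reach src tgt A B φ x y := by
    rintro x y (⟨⟨e, b⟩, hab, rfl, rfl⟩ | hmem)
    · by_cases hm : (e, true) ∈ l ∨ (e, false) ∈ l
      · have hflip : ψ e = flipFour (φ e) := by simp only [hψ, revCyc, if_pos hm]
        rw [hflip, allows_flip] at hab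
        cases hφe : φ e with
        | zero => rw [hφe] at hab; exact absurd hab (by simp [allows])
        | two =>
            refine Relation.ReflTransGen.single (Or.inl ⟨(e, b), ?_, rfl, rfl⟩)
            rw [hφe]; trivial
        | forward =>
            have hb : (!b) = true := by rw [hφe] at hab; exact hab
            have hb' : b = false := by cases b <;> simp_all
            subst hb'
            have hel : (e, true) ∈ l := by
              rcases hm with h | h
              · exact h
              · exact absurd (huniq _ h true (by simp [hφe, oneWayFour])) (by simp)
            have := cycφ (e, true) hel
            simpa [arcTail, arcHead] using this
        | backward =>
            have hb : (!b) = false := by rw [hφe] at hab; exact hab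
            have hb' : b = true := by cases b <;> simp_all
            subst hb'
            have hel : (e, false) ∈ l := by
              rcases hm with h | h
              · exact absurd (huniq _ h false (by simp [hφe, oneWayFour])) (by simp)
              · exact h
            have := cycφ (e, false) hel
            simpa [arcTail, arcHead] using this
      · refine Relation.ReflTransGen.single (Or.inl ⟨(e, b), ?_, rfl, rfl⟩)
        rw [show φ e = ψ e by simp only [hψ, revCyc, if_neg hm]]
        exact hab
    · exact Relation.ReflTransGen.single (Or.inr hmem)
  intro x y
  exact ⟨reachMono src tgt A B stepφψ x y, reachMono src tgt A B stepψφ x y⟩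

lemma reachT (θ θ' : E → Four) (W : Set V)
    (hinv : ∀ a : E × Bool, allows (θ a.1) a.2 → arcHead src tgt a ∈ W → arcTail src tgt a ∈ W)
    (hAB : ∀ p ∈ A ∪ B, ((p : V × V).1 ∈ W ↔ p.2 ∈ W))
    (hagree : ∀ e, src e ∈ W → tgt e ∈ W → θ' e = θ e) :
    ∀ x y, reach src tgt A B θ x y → y ∈ W → reach src tgt A B θ' x y := by
  intro x y hr
  induction hr with
  | refl => exact fun _ => Relation.ReflTransGen.refl
  | tail h1 h2 ih =>
    intro hy
    rcases h2 with ⟨a, hab, hta, hha⟩ | hmem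
    · have htw : arcTail src tgt a ∈ W := hinv a hab (hha ▸ hy)
      have hhw : arcHead src tgt a ∈ W := hha ▸ hy
      have heq : θ' a.1 = θ a.1 := by
        obtain ⟨e, b⟩ := a
        cases b
        · simp only [arcTail, arcHead, if_neg] at htw hhw
          exact hagree e hhw htw
        · simp only [arcTail, arcHead, if_pos] at htw hhw
          exact hagree e htw hhw
      exact (ih (hta ▸ htw)).tail (Or.inl ⟨a, heq ▸ hab, hta, hha⟩)
    · have hz := (hAB _ hmem).mpr hy
      exact (ih hz).tail (Or.inr hmem)

lemma reachH (θ θ' : E → Four) (W : Set V)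
    (hinv : ∀ a : E × Bool, allows (θ a.1) a.2 → arcTail src tgt a ∈ W → arcHead src tgt a ∈ W)
    (hAB : ∀ p ∈ A ∪ B, ((p : V × V).1 ∈ W ↔ p.2 ∈ W))
    (hagree : ∀ e, src e ∈ W → tgt e ∈ W → θ' e = θ e) :
    ∀ x y, reach src tgt A B θ x y → x ∈ W → reach src tgt A B θ' x y := by
  intro x y hr
  induction hr using Relation.ReflTransGen.head_induction_on with
  | refl => exact fun _ => Relation.ReflTransGen.refl
  | head h1 h2 ih =>
    intro hx
    rcases h1 with ⟨a, hab, hta, hha⟩ | hmem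
    · have htw : arcTail src tgt a ∈ W := hta ▸ hx
      have hhw : arcHead src tgt a ∈ W := hinv a hab htw
      have heq : θ' a.1 = θ a.1 := by
        obtain ⟨e, b⟩ := a
        cases b
        · simp only [arcTail, arcHead, if_neg] at htw hhw
          exact hagree e hhw htw
        · simp only [arcTail, arcHead, if_pos] at htw hhw
          exact hagree e htw hhw
      exact Relation.ReflTransGen.head (Or.inl ⟨a, heq ▸ hab, hta, hha⟩) (ih (hha ▸ hhw))
    · have hz := (hAB _ hmem).mp hx
      exact Relation.ReflTransGen.head (Or.inr hmem) (ih hz)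

lemma cocycle_reach_iff (φ : E → Four) (V1 : Set V)
    (hcut : IsABCocycleCut src tgt A B φ V1) :
    ∀ p ∈ A ∪ B, (reach src tgt A B φ p.2 p.1 ↔
      reach src tgt A B (revCut src tgt φ V1) p.2 p.1) := by
  obtain ⟨-, hno, hAB⟩ := hcut
  set ψ := revCut src tgt φ V1 with hψdef
  have hagree1 : ∀ e, src e ∈ V1 → tgt e ∈ V1 → ψ e = φ e := by
    intro e h1 h2
    simp only [hψdef, revCut, if_neg (show ¬ edgeCrosses src tgt V1 e by
      simp [edgeCrosses, h1, h2])]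
  have hagree2 : ∀ e, src e ∈ (V1ᶜ : Set V) → tgt e ∈ (V1ᶜ : Set V) → ψ e = φ e := by
    intro e h1 h2
    simp only [hψdef, revCut, if_neg (show ¬ edgeCrosses src tgt V1 e by
      simp only [Set.mem_compl_iff] at h1 h2
      simp [edgeCrosses, h1, h2])]
  have hinvφ : ∀ a : E × Bool, allows (φ a.1) a.2 →
      arcHead src tgt a ∈ V1 → arcTail src tgt a ∈ V1 := by
    intro a hab hh
    by_contra ht
    exact hno a hab ⟨ht, hh⟩
  have hinvψ : ∀ a : E × Bool, allows (ψ a.1) a.2 →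
      arcTail src tgt a ∈ V1 → arcHead src tgt a ∈ V1 := by
    intro a hab ht
    by_contra hh
    have hcr : edgeCrosses src tgt V1 a.1 := by
      obtain ⟨e, b⟩ := a
      cases b
      · simp only [arcTail, arcHead, if_neg] at ht hh
        exact Or.inr ⟨ht, hh⟩
      · simp only [arcTail, arcHead, if_pos] at ht hh
        exact Or.inl ⟨ht, hh⟩
    rw [hψdef] at hab
    simp only [revCut, if_pos hcr, allows_flip] at hab
    refine hno (a.1, !a.2) hab ⟨?_, ?_⟩
    · rw [tail_flip]; exact hh
    · rw [head_flip]; exact ht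
  intro p hp
  by_cases hp1 : p.1 ∈ V1
  · have hp2 : p.2 ∈ V1 := (hAB p hp).mp hp1
    constructor
    · intro h
      exact reachT src tgt A B φ ψ V1 hinvφ hAB (fun e h1 h2 => hagree1 e h1 h2) p.2 p.1 h hp1
    · intro h
      exact reachH src tgt A B ψ φ V1 hinvψ hAB (fun e h1 h2 => (hagree1 e h1 h2).symm) p.2 p.1 h hp2
  · have hp2 : p.2 ∉ V1 := fun h => hp1 ((hAB p hp).mpr h)
    have hABc : ∀ q ∈ A ∪ B, ((q : V × V).1 ∈ (V1ᶜ : Set V) ↔ q.2 ∈ (V1ᶜ : Set V)) := by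
      intro q hq
      simp only [Set.mem_compl_iff]
      exact not_iff_not.mpr (hAB q hq)
    constructor
    · intro h
      refine reachH src tgt A B φ ψ (V1ᶜ) ?_ hABc (fun e h1 h2 => hagree2 e h1 h2) p.2 p.1 h hp2
      intro a hab ht hh2
      exact hno a hab ⟨ht, hh2⟩
    · intro h
      refine reachT src tgt A B ψ φ (V1ᶜ) ?_ hABc (fun e h1 h2 => (hagree2 e h1 h2).symm) p.2 p.1 h hp1
      intro a hab hh ht
      exact hh (hinvψ a hab ht)

lemma ccStep_valid_iff [DecidableEq E] {φ ψ : E → Four}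
    (h : CCStep src tgt A B φ ψ) :
    IsValid src tgt A B φ ↔ IsValid src tgt A B ψ := by
  rcases h with ⟨l, hcyc, hall, rfl⟩ | ⟨V1, hcut, rfl⟩
  · have hiff := cycleStep_reach src tgt A B φ l hcyc hall
    unfold IsValid
    constructor
    · rintro ⟨hA, hB⟩
      exact ⟨fun p hp hr => hA p hp ((hiff _ _).mpr hr),
             fun p hp => (hiff _ _).mp (hB p hp)⟩
    · rintro ⟨hA, hB⟩
      exact ⟨fun p hp hr => hA p hp ((hiff _ _).mp hr),
             fun p hp => (hiff _ _).mpr (hB p hp)⟩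
  · have hiff := cocycle_reach_iff src tgt A B φ V1 hcut
    unfold IsValid
    constructor
    · rintro ⟨hA, hB⟩
      exact ⟨fun p hp hr => hA p hp ((hiff p (Set.mem_union_left B hp)).mpr hr),
             fun p hp => (hiff p (Set.mem_union_right A hp)).mp (hB p hp)⟩
    · rintro ⟨hA, hB⟩
      exact ⟨fun p hp hr => hA p hp ((hiff p (Set.mem_union_left B hp)).mp hr),
             fun p hp => (hiff p (Set.mem_union_right A hp)).mpr (hB p hp)⟩

end AuxMain

/-- If two fourientations `φ, φ'` of `G` are cycle-cocycle equivalent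
(one is obtained from the other by repeatedly reversing directed cycles and/or
`(A,B)`-cocycles), then `φ` is `(A,B)`-valid iff `φ'` is `(A,B)`-valid. -/
theorem statement9 {V E : Type*} [Fintype V] [Fintype E] [DecidableEq E] (src tgt : E → V)
    (A B : Set (V × V)) (φ φ' : E → Four)
    (h : Relation.ReflTransGen (CCStep src tgt A B) φ φ') :
    IsValid src tgt A B φ ↔ IsValid src tgt A B φ' := by
  induction h with
  | refl => exact Iff.rfl
  | tail _ h2 ih => exact ih.trans (ccStep_valid_iff src tgt A B h2)
end SubgraphsVsOrientations
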